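/- Let u : (0,∞) → [0,∞) be non-increasing with ū(y) := ∫_y^∞ u(r) dr < ∞ for every y > 0, and let β > 0. Then the function y ↦ e^{−βy} ( u(y) + β ū(y) ) is non-increasing on (0,∞). Consequently, if a measure μ on (0,∞) has a non-increasing density u, then the measure μ^β(dy) = e^{−βy} ( μ(dy) + β μ((y,∞)) dy ) also has a non-increasing density, i.e. the class 𝒫 of positive measures on ℝ₊ admitting a non-increasing density is preserved. -/

import Mathlib

open MeasureTheory Real Set

/-- Let `u : (0,∞) → [0,∞)` be non-increasing with `ū(y) = ∫_y^∞ u(r) dr < ∞` for each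
`y > 0`, and `β > 0`. Then `y ↦ e^{-βy}(u(y) + β ū(y))` is non-increasing on `(0,∞)`.
Consequently, if a measure `μ` on `(0,∞)` has non-increasing density `u`, then
`μ^β(dy) = e^{-βy}(μ(dy) + β μ((y,∞)) dy)` also has a non-increasing density, i.e. the
class `𝒫` of positive measures on `ℝ₊` admitting a non-increasing density is preserved. -/
theorem stmt6 (u : ℝ → ℝ) (hu0 : ∀ y ∈ Ioi (0:ℝ), 0 ≤ u y)
    (hu : AntitoneOn u (Ioi 0))
    (hui : ∀ y : ℝ, 0 < y → IntegrableOn u (Ioi y) volume)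
    (β : ℝ) (hβ : 0 < β) :
    AntitoneOn
        (fun y : ℝ => exp (-β * y) * (u y + β * ∫ r in Ioi y, u r)) (Ioi 0) ∧
      ∀ μ : Measure ℝ,
        μ = (volume.restrict (Ioi (0:ℝ))).withDensity
              (fun y => ENNReal.ofReal (u y)) →
        ∃ w : ℝ → ℝ, AntitoneOn w (Ioi 0) ∧
          μ.withDensity (fun y => ENNReal.ofReal (exp (-β * y))) +
              (volume.restrict (Ioi (0:ℝ))).withDensity
                (fun y => ENNReal.ofReal (exp (-β * y) * β * (μ (Ioi y)).toReal)) =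
            (volume.restrict (Ioi (0:ℝ))).withDensity
              (fun y => ENNReal.ofReal (w y)) := by
  have part1 : AntitoneOn
      (fun y : ℝ => exp (-β * y) * (u y + β * ∫ r in Ioi y, u r)) (Ioi 0) := by
    intro a ha b hb hab
    simp only [mem_Ioi] at ha hb
    have hsplit : ∫ r in Ioi a, u r = (∫ r in Ioc a b, u r) + ∫ r in Ioi b, u r := by
      rw [← setIntegral_union (Set.Ioc_disjoint_Ioi le_rfl) measurableSet_Ioi
        ((hui a ha).mono_set Set.Ioc_subset_Ioi_self)
        ((hui a ha).mono_set (Set.Ioi_subset_Ioi hab)),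
        Set.Ioc_union_Ioi_eq_Ioi hab]
    have hlow : (b - a) * u b ≤ ∫ r in Ioc a b, u r := by
      have := setIntegral_ge_of_const_le (μ := volume) (c := u b) measurableSet_Ioc
        (by simp) (fun r hr => hu (lt_trans ha hr.1) hb hr.2)
        ((hui a ha).mono_set Set.Ioc_subset_Ioi_self)
      rwa [Real.volume_real_Ioc_of_le hab, smul_eq_mul] at this
    have hub : 0 ≤ ∫ r in Ioi b, u r :=
      setIntegral_nonneg measurableSet_Ioi fun r hr => hu0 r (lt_trans hb hr)
    have hexp : exp (-β * b) ≤ exp (-β * a) := exp_le_exp.mpr (by nlinarith)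
    have hexp_pos : (0:ℝ) < exp (-β * b) := exp_pos _
    have huab : u b ≤ u a := hu ha hb hab
    have hub0 : 0 ≤ u b := hu0 b hb
    simp only
    rw [hsplit]
    nlinarith [mul_le_mul_of_nonneg_right hexp (by nlinarith : (0:ℝ) ≤ u b + β * ∫ r in Ioi b, u r),
      mul_pos (exp_pos (-β * a)) (mul_pos hβ (by nlinarith : (0:ℝ) < (b - a) * u b + 1)),
      mul_le_mul_of_nonneg_left huab (le_of_lt (exp_pos (-β * a))),
      mul_le_mul_of_nonneg_left hlow (mul_pos (exp_pos (-β * a)) hβ).le,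
      mul_nonneg (mul_nonneg (exp_pos (-β * a)).le hβ.le) (mul_nonneg (by linarith : (0:ℝ) ≤ b - a) hub0)]
  refine ⟨part1, fun μ hμ => ?_⟩
  set ν := volume.restrict (Ioi (0:ℝ)) with hν
  have hIoi : Ioi (0:ℝ) = ⋃ n : ℕ, Ioi (((n:ℝ)+1)⁻¹) := by
    ext x
    simp only [mem_iUnion, mem_Ioi]
    constructor
    · intro hx
      obtain ⟨n, hn⟩ := exists_nat_one_div_lt hx
      exact ⟨n, by rwa [one_div] at hn⟩
    · rintro ⟨n, hn⟩
      exact lt_trans (by positivity) hn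
  have hae : AEMeasurable u ν := by
    rw [hν, hIoi]
    exact aemeasurable_iUnion_iff.mpr fun n =>
      (hui _ (by positivity)).aestronglyMeasurable.aemeasurable
  have hμIoi : ∀ y : ℝ, 0 < y → μ (Ioi y) = ENNReal.ofReal (∫ r in Ioi y, u r) := by
    intro y hy
    rw [hμ, withDensity_apply _ measurableSet_Ioi, Measure.restrict_restrict measurableSet_Ioi,
      Set.inter_eq_left.mpr (Set.Ioi_subset_Ioi hy.le),
      ← ofReal_integral_eq_lintegral_ofReal (hui y hy)
        ((ae_restrict_iff' measurableSet_Ioi).2 (ae_of_all _ fun r hr => hu0 r (lt_trans hy hr)))]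
  set g : ℝ → ENNReal := fun y => ENNReal.ofReal (exp (-β * y)) with hgdef
  have hg : Measurable g := by
    exact (measurable_const.mul measurable_id).exp.ennreal_ofReal
  set h2 : ℝ → ENNReal := fun y => ENNReal.ofReal (exp (-β * y) * β * (μ (Ioi y)).toReal) with hh2def
  have hh2 : Measurable h2 := by
    have : Measurable fun y : ℝ => (μ (Ioi y)).toReal :=
      (Antitone.measurable fun x y hxy => measure_mono (Ioi_subset_Ioi hxy)).ennreal_toReal
    exact (((measurable_const.mul measurable_id).exp.mul measurable_const).mul this).ennreal_ofReal
  refine ⟨fun y : ℝ => exp (-β * y) * (u y + β * ∫ r in Ioi y, u r), part1, ?_⟩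
  have h1 : μ.withDensity g = ν.withDensity ((fun y => ENNReal.ofReal (u y)) * g) := by
    rw [hμ, withDensity_mul₀ hae.ennreal_ofReal hg.aemeasurable]
  rw [h1, ← withDensity_add_right _ hh2]
  apply withDensity_congr_ae
  filter_upwards [ae_restrict_mem measurableSet_Ioi] with y hy
  simp only [mem_Ioi] at hy
  have hub : 0 ≤ ∫ r in Ioi y, u r :=
    setIntegral_nonneg measurableSet_Ioi fun r hr => hu0 r (lt_trans hy hr)
  simp only [Pi.add_apply, Pi.mul_apply, hgdef, hh2def]
  rw [hμIoi y hy, ENNReal.toReal_ofReal hub, ← ENNReal.ofReal_mul (hu0 y hy),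
    ← ENNReal.ofReal_add (mul_nonneg (hu0 y hy) (exp_pos _).le) (by positivity)]
  congr 1
  ring
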